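/- A right congruence ρ on A^{-ω} is open if and only if there exists k ≥ 1 such that every word of A^k is a reset word for the Cayley graph Cay(ρ) and Cay(ρ) is a strongly connected, deterministic, complete A-graph with finitely many vertices. -/
import Mathlib


/- Left infinite words over A are modelled as functions ℕ → A, where index 0 is
   the rightmost letter.  Appending a finite word on the right: -/

def lapp {A : Type*} (x : ℕ → A) (u : List A) : ℕ → A := fun n =>
  if h : n < u.length then u.reverse[n]'(by simpa using h) else x (n - u.length)

/-- u ∈ A* is a suffix of the left infinite word x -/
def IsLSuffix {A : Type*} (u : List A) (x : ℕ → A) : Prop := ∃ y : ℕ → A, x = lapp y u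

/-- right congruence on A^{-ω}: an equivalence relation compatible with the
  right action of A* (equivalently, with appending each letter) -/
def IsRightCongruence {A : Type*} (ρ : (ℕ → A) → (ℕ → A) → Prop) : Prop :=
  Equivalence ρ ∧ ∀ x y : ℕ → A, ∀ a : A, ρ x y → ρ (lapp x [a]) (lapp y [a])

section Graphs

variable {A Q : Type*}

/-- a left infinite path labelled x ending at q, in the A-graph with edge
  relation E (E p a q : there is an edge from p to q labelled a) -/
def HasLInfPath (E : Q → A → Q → Prop) (x : ℕ → A) (q : Q) : Prop :=
  ∃ f : ℕ → Q, f 0 = q ∧ ∀ n : ℕ, E (f (n + 1)) (x n) (f n)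

def OmegaDeterministic (E : Q → A → Q → Prop) : Prop :=
  ∀ x : ℕ → A, ∀ q q' : Q, HasLInfPath E x q → HasLInfPath E x q' → q = q'

def OmegaComplete (E : Q → A → Q → Prop) : Prop :=
  ∀ x : ℕ → A, ∃ q : Q, HasLInfPath E x q

def OmegaTrim (E : Q → A → Q → Prop) : Prop :=
  ∀ q : Q, ∃ x : ℕ → A, HasLInfPath E x q

/-- (-ω)-reset graph -/
def OmegaReset (E : Q → A → Q → Prop) : Prop :=
  OmegaDeterministic E ∧ OmegaComplete E ∧ OmegaTrim E

/-- finite paths: HasPath E q u q' means u labels a path from q to q' -/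
def HasPath (E : Q → A → Q → Prop) : Q → List A → Q → Prop
  | q, [], q' => q = q'
  | q, a :: u, q' => ∃ p : Q, E q a p ∧ HasPath E p u q'

end Graphs

/-- the setoid on A^{-ω} given by a right congruence -/
def caySetoid {A : Type*} {ρ : (ℕ → A) → (ℕ → A) → Prop} (hρ : IsRightCongruence ρ) :
    Setoid (ℕ → A) := ⟨ρ, hρ.1⟩

/-- the edge relation of the Cayley graph Cay(ρ): edges (uρ, a, (ua)ρ) -/
def cayE {A : Type*} {ρ : (ℕ → A) → (ℕ → A) → Prop} (hρ : IsRightCongruence ρ) :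
    Quotient (caySetoid hρ) → A → Quotient (caySetoid hρ) → Prop :=
  fun c a c' => ∃ u : ℕ → A, c = Quotient.mk (caySetoid hρ) u ∧
    c' = Quotient.mk (caySetoid hρ) (lapp u [a])

section CayAux

open PiNat

variable {A : Type*} {ρ : (ℕ → A) → (ℕ → A) → Prop} (hρ : IsRightCongruence ρ)

lemma lapp_nil' (z : ℕ → A) : lapp z ([] : List A) = z := by
  funext n; simp [lapp]

lemma lapp_append' (z : ℕ → A) (u v : List A) :
    lapp (lapp z u) v = lapp z (u ++ v) := by
  funext n
  simp only [lapp, List.length_append, List.reverse_append]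
  by_cases h1 : n < v.length
  · rw [dif_pos h1, dif_pos (by omega)]
    rw [List.getElem_append_left (by simpa using h1)]
  · rw [dif_neg h1]
    by_cases h2 : n - v.length < u.length
    · rw [dif_pos h2, dif_pos (by omega)]
      rw [List.getElem_append_right (by simpa using h1)]
      simp
    · rw [dif_neg h2, dif_neg (by omega)]
      congr 1; omega

lemma ofFn_rev_decomp (x : ℕ → A) (k : ℕ) :
    x = lapp (fun n => x (n + k)) ((List.ofFn fun i : Fin k => x i).reverse) := by
  funext n
  simp only [lapp, List.length_reverse, List.length_ofFn, List.reverse_reverse]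
  by_cases h : n < k
  · rw [dif_pos h, List.getElem_ofFn]
  · rw [dif_neg h]; congr 1; omega

lemma cayE_mk (z : ℕ → A) (a : A) :
    cayE hρ (Quotient.mk (caySetoid hρ) z) a (Quotient.mk (caySetoid hρ) (lapp z [a])) :=
  ⟨z, rfl, rfl⟩

lemma cayE_det' {q r r' : Quotient (caySetoid hρ)} {a : A}
    (h : cayE hρ q a r) (h' : cayE hρ q a r') : r = r' := by
  obtain ⟨u, rfl, rfl⟩ := h
  obtain ⟨v, hv, rfl⟩ := h'
  exact Quotient.sound (hρ.2 u v a (Quotient.exact hv))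

lemma hasPath_lapp (u : List A) : ∀ z : ℕ → A,
    HasPath (cayE hρ) (Quotient.mk (caySetoid hρ) z) u
      (Quotient.mk (caySetoid hρ) (lapp z u)) := by
  induction u with
  | nil => intro z; rw [lapp_nil']; rfl
  | cons a u ih =>
    intro z
    refine ⟨Quotient.mk (caySetoid hρ) (lapp z [a]), cayE_mk hρ z a, ?_⟩
    have := ih (lapp z [a])
    rwa [lapp_append'] at this

lemma hasPath_eq (u : List A) : ∀ z : ℕ → A, ∀ r : Quotient (caySetoid hρ),
    HasPath (cayE hρ) (Quotient.mk (caySetoid hρ) z) u r →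
      r = Quotient.mk (caySetoid hρ) (lapp z u) := by
  induction u with
  | nil => intro z r h; rw [lapp_nil']; exact h.symm
  | cons a u ih =>
    rintro z r ⟨p, hp, hpath⟩
    obtain ⟨w, hw, rfl⟩ := hp
    have hp' : Quotient.mk (caySetoid hρ) (lapp w [a]) =
        Quotient.mk (caySetoid hρ) (lapp z [a]) :=
      Quotient.sound (hρ.2 w z a (Quotient.exact hw.symm))
    rw [hp'] at hpath
    have := ih (lapp z [a]) r hpath
    rwa [lapp_append'] at this

variable [TopologicalSpace A] [DiscreteTopology A]

/-- cylinder sets are open -/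
lemma isOpen_agree (x : ℕ → A) (k : ℕ) :
    IsOpen {y : ℕ → A | ∀ n < k, y n = x n} :=
  PiNat.isOpen_cylinder (E := fun _ : ℕ => A) x k

/-- the key uniformity: openness gives a uniform window size k -/
lemma open_uniform [Fintype A] (hE : Equivalence ρ)
    (hopen : IsOpen {p : (ℕ → A) × (ℕ → A) | ρ p.1 p.2}) :
    ∃ k : ℕ, 1 ≤ k ∧ ∀ x y x' y' : ℕ → A, ρ x y →
      (∀ n < k, x' n = x n) → (∀ n < k, y' n = y n) → ρ x' y' := by
  set S := {p : (ℕ → A) × (ℕ → A) | ρ p.1 p.2} with hS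
  -- classes are open
  have hclass : ∀ x : ℕ → A, IsOpen {y | ρ x y} := fun x =>
    hopen.preimage (Continuous.prodMk_right x)
  -- S is closed
  have hclosed : IsClosed S := by
    rw [← isOpen_compl_iff, isOpen_iff_mem_nhds]
    intro p hp
    have : IsOpen ({y | ρ p.1 y} ×ˢ {y | ρ p.2 y}) := (hclass p.1).prod (hclass p.2)
    refine Filter.mem_of_superset (this.mem_nhds ⟨hE.1 p.1, hE.1 p.2⟩) ?_
    rintro ⟨x, y⟩ ⟨hx, hy⟩ hxy
    exact hp (hE.3 hx (hE.3 hxy (hE.2 hy)))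
  have hcomp : IsCompact S := hclosed.isCompact
  -- for each p in S, a cylinder neighborhood inside S
  have hnbhd : ∀ p : S, ∃ n : ℕ,
      (PiNat.cylinder (p : (ℕ → A) × (ℕ → A)).1 n ×ˢ
        PiNat.cylinder (p : (ℕ → A) × (ℕ → A)).2 n) ⊆ S := by
    rintro ⟨p, hp⟩
    have hmem : S ∈ nhds p := hopen.mem_nhds hp
    rw [nhds_prod_eq, Filter.mem_prod_iff] at hmem
    obtain ⟨s, hs, t, ht, hst⟩ := hmem
    obtain ⟨c1, ⟨x1, n1, rfl⟩, hx1, hsub1⟩ :=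
      (PiNat.isTopologicalBasis_cylinders (fun _ : ℕ => A)).mem_nhds_iff.1 hs
    obtain ⟨c2, ⟨x2, n2, rfl⟩, hx2, hsub2⟩ :=
      (PiNat.isTopologicalBasis_cylinders (fun _ : ℕ => A)).mem_nhds_iff.1 ht
    refine ⟨max n1 n2, ?_⟩
    rintro ⟨y1, y2⟩ ⟨hy1, hy2⟩
    refine hst ⟨hsub1 fun i hi => ?_, hsub2 fun i hi => ?_⟩
    · rw [hy1 i (lt_of_lt_of_le hi (le_max_left _ _))]; exact hx1 i hi
    · rw [hy2 i (lt_of_lt_of_le hi (le_max_right _ _))]; exact hx2 i hi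
  choose N hN using hnbhd
  -- compactness: finite subcover
  obtain ⟨t, ht⟩ := hcomp.elim_finite_subcover
    (fun p : S => PiNat.cylinder (p : (ℕ → A) × (ℕ → A)).1 (N p) ×ˢ
      PiNat.cylinder (p : (ℕ → A) × (ℕ → A)).2 (N p))
    (fun p => (PiNat.isOpen_cylinder _ _ _).prod (PiNat.isOpen_cylinder _ _ _))
    (fun p hp => Set.mem_iUnion.2 ⟨⟨p, hp⟩, PiNat.self_mem_cylinder _ _,
      PiNat.self_mem_cylinder _ _⟩)
  refine ⟨t.sup N + 1, by omega, fun x y x' y' hxy hx hy => ?_⟩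
  have hmem : (x, y) ∈ ⋃ p ∈ t, PiNat.cylinder (p : (ℕ → A) × (ℕ → A)).1 (N p) ×ˢ
      PiNat.cylinder (p : (ℕ → A) × (ℕ → A)).2 (N p) := ht hxy
  obtain ⟨p, hpt, hxc, hyc⟩ := Set.mem_iUnion₂.1 hmem
  have hle : N p ≤ t.sup N + 1 := le_trans (Finset.le_sup hpt) (Nat.le_succ _)
  have : (x', y') ∈ PiNat.cylinder (p : (ℕ → A) × (ℕ → A)).1 (N p) ×ˢ
      PiNat.cylinder (p : (ℕ → A) × (ℕ → A)).2 (N p) := by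
    constructor
    · intro i hi; exact (hx i (lt_of_lt_of_le hi hle)).trans (hxc i hi)
    · intro i hi; exact (hy i (lt_of_lt_of_le hi hle)).trans (hyc i hi)
  exact hN p this

end CayAux

section CayAux2

variable {A : Type*} {ρ : (ℕ → A) → (ℕ → A) → Prop} (hρ : IsRightCongruence ρ)

lemma lapp_ofFn_rev (x y : ℕ → A) (k n : ℕ) (hn : n < k) :
    lapp x ((List.ofFn fun i : Fin k => y i).reverse) n = y n := by
  simp only [lapp, List.length_reverse, List.length_ofFn, List.reverse_reverse]
  rw [dif_pos hn, List.getElem_ofFn]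

end CayAux2

/-- a right congruence ρ on A^{-ω} is open iff for some k ≥ 1 every
  word of length k is a reset word for Cay(ρ), and Cay(ρ) is a strongly
  connected deterministic complete A-graph with finitely many vertices. -/
theorem open_iff_cayley_reset {A : Type*} [Fintype A] [Nonempty A]
    [TopologicalSpace A] [DiscreteTopology A]
    (ρ : (ℕ → A) → (ℕ → A) → Prop) (hρ : IsRightCongruence ρ) :
    IsOpen {p : (ℕ → A) × (ℕ → A) | ρ p.1 p.2} ↔
      ∃ k : ℕ, 1 ≤ k ∧
        (∀ u : List A, u.length = k →
          ∀ q q' r r' : Quotient (caySetoid hρ),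
            HasPath (cayE hρ) q u q' → HasPath (cayE hρ) r u r' → q' = r') ∧
        (∀ q r : Quotient (caySetoid hρ), ∃ u : List A, HasPath (cayE hρ) q u r) ∧
        (∀ q : Quotient (caySetoid hρ), ∀ a : A, ∀ r r', cayE hρ q a r → cayE hρ q a r' → r = r') ∧
        (∀ q : Quotient (caySetoid hρ), ∀ a : A, ∃ r, cayE hρ q a r) ∧
        Finite (Quotient (caySetoid hρ)) := by
  constructor
  · intro hopen
    obtain ⟨k, hk1, hP⟩ := open_uniform (ρ := ρ) hρ.1 hopen
    refine ⟨k, hk1, ?_, ?_, ?_, ?_, ?_⟩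
    · -- reset words
      intro u hu q q' r r' hq hr
      obtain ⟨z, rfl⟩ := Quotient.exists_rep q
      obtain ⟨w, rfl⟩ := Quotient.exists_rep r
      rw [hasPath_eq hρ u z q' hq, hasPath_eq hρ u w r' hr]
      refine Quotient.sound (hP (lapp z u) (lapp z u) (lapp z u) (lapp w u)
        (hρ.1.1 _) (fun n _ => rfl) ?_)
      intro n hn
      have hn' : n < u.length := by omega
      simp only [lapp, dif_pos hn']
    · -- strong connectivity
      intro q r
      obtain ⟨x, rfl⟩ := Quotient.exists_rep q
      obtain ⟨y, rfl⟩ := Quotient.exists_rep r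
      refine ⟨(List.ofFn fun i : Fin k => y i).reverse, ?_⟩
      have h1 := hasPath_lapp hρ ((List.ofFn fun i : Fin k => y i).reverse) x
      have h2 : Quotient.mk (caySetoid hρ) (lapp x ((List.ofFn fun i : Fin k => y i).reverse)) =
          Quotient.mk (caySetoid hρ) y :=
        Quotient.sound (hP y y _ y (hρ.1.1 y)
          (fun n hn => lapp_ofFn_rev x y k n hn) (fun n _ => rfl))
      rwa [h2] at h1
    · -- determinism
      intro q a r r' h h'
      exact cayE_det' hρ h h'
    · -- completeness
      intro q a
      obtain ⟨x, rfl⟩ := Quotient.exists_rep q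
      exact ⟨_, cayE_mk hρ x a⟩
    · -- finiteness
      have hsurj : Function.Surjective
          (fun v : Fin k → A => Quotient.mk (caySetoid hρ)
            (fun n => if h : n < k then v ⟨n, h⟩ else Classical.arbitrary A)) := by
        intro q
        obtain ⟨x, rfl⟩ := Quotient.exists_rep q
        refine ⟨fun i => x i, Quotient.sound (hP x x _ x (hρ.1.1 x) ?_ (fun n _ => rfl))⟩
        intro n hn
        simp only [dif_pos hn]
      exact Finite.of_surjective _ hsurj
  · rintro ⟨k, hk1, hreset, -⟩
    rw [isOpen_iff_mem_nhds]
    rintro ⟨x, y⟩ hxy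
    have hopenN : IsOpen ({x' : ℕ → A | ∀ n < k, x' n = x n} ×ˢ
        {y' : ℕ → A | ∀ n < k, y' n = y n}) :=
      (isOpen_agree x k).prod (isOpen_agree y k)
    refine Filter.mem_of_superset (hopenN.mem_nhds ⟨fun n _ => rfl, fun n _ => rfl⟩) ?_
    rintro ⟨x', y'⟩ ⟨hx', hy'⟩
    have key : ∀ z z' : ℕ → A, (∀ n < k, z' n = z n) →
        Quotient.mk (caySetoid hρ) z = Quotient.mk (caySetoid hρ) z' := by
      intro z z' hzz
      have hofn : (List.ofFn fun i : Fin k => z' i) = (List.ofFn fun i : Fin k => z i) :=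
        congrArg List.ofFn (funext fun i => hzz i i.isLt)
      have hlen : ((List.ofFn fun i : Fin k => z i).reverse).length = k := by simp
      have p1 := hasPath_lapp hρ ((List.ofFn fun i : Fin k => z i).reverse) (fun n => z (n + k))
      rw [← ofFn_rev_decomp z k] at p1
      have p2 := hasPath_lapp hρ ((List.ofFn fun i : Fin k => z' i).reverse) (fun n => z' (n + k))
      rw [← ofFn_rev_decomp z' k, hofn] at p2
      exact hreset _ hlen _ _ _ _ p1 p2
    have mkx := Quotient.exact (key x x' hx')
    have mky := Quotient.exact (key y y' hy')
    exact hρ.1.3 (hρ.1.2 mkx) (hρ.1.3 hxy mky)
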